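/- Let d ≥ 0 be an integer and let D_d be the class of d-degenerate graphs. For every d-degenerate graph H there exist positive reals c₁, c₂ such that c₁·n^{α_d(H)} ≤ ex(H, D_d, n) ≤ c₂·n^{α_d(H)} for infinitely many (lower bound) and all (upper bound) positive integers n, where α_d(H) is the maximum size of an independent set of vertices of degree at most d in H. -/

import Mathlib

open Function Set

/-- A graph is `d`-degenerate if every (induced) subgraph on a nonempty vertex set has a
vertex with at most `d` neighbors inside that set. -/
def Degenerate {V : Type} (d : ℕ) (G : SimpleGraph V) : Prop :=
  ∀ s : Set V, s.Nonempty → ∃ v ∈ s, (G.neighborSet v ∩ s).ncard ≤ d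

/-- `α_d(H)`: the maximum size of a set of pairwise non-adjacent vertices of degree at most
`d` in `H`. -/
noncomputable def alphaD {V : Type} (d : ℕ) (H : SimpleGraph V) : ℕ :=
  sSup {n | ∃ s : Set V, s.Pairwise (fun u v => ¬ H.Adj u v) ∧
      (∀ v ∈ s, (H.neighborSet v).ncard ≤ d) ∧ s.ncard = n}

/-- The number of subgraphs of `G` isomorphic to `H`. -/
noncomputable def subCount {V W : Type} (H : SimpleGraph V) (G : SimpleGraph W) : ℕ :=
  Nat.card {G' : G.Subgraph // Nonempty (G'.coe ≃g H)}


lemma finite_subgraph {W : Type} [Finite W] (G : SimpleGraph W) : Finite G.Subgraph := by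
  have hinj : Function.Injective (fun G' : G.Subgraph => (G'.verts, G'.Adj)) := by
    intro a b h
    rw [Prod.ext_iff] at h
    exact SimpleGraph.Subgraph.ext h.1 h.2
  exact Finite.of_injective _ hinj

/-- The set of "embedding maps" of `H` into `G`. -/
def EmbSet {V W : Type} (H : SimpleGraph V) (G : SimpleGraph W) : Set (V → W) :=
  {f | Function.Injective f ∧ ∀ u v, H.Adj u v → G.Adj (f u) (f v)}

lemma subCount_le_embs {V W : Type} [Finite V] [Finite W] (H : SimpleGraph V)
    (G : SimpleGraph W) : subCount H G ≤ Nat.card (EmbSet H G) := by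
  classical
  have : Finite (EmbSet H G) := by infer_instance
  set F : {G' : G.Subgraph // Nonempty (G'.coe ≃g H)} → (V → W) :=
    fun p => fun v => ((Classical.choice p.2).symm v : W) with hF
  have hmem : ∀ p, F p ∈ EmbSet H G := by
    intro p
    set φ := Classical.choice p.2
    constructor
    · intro a b hab
      have : (φ.symm a : ↑p.1.verts) = φ.symm b := Subtype.ext hab
      simpa using φ.symm.injective this
    · intro u v huv
      have : p.1.coe.Adj (φ.symm u) (φ.symm v) := φ.symm.map_adj_iff.mpr huv
      exact ((p.1.coe_adj _ _) ▸ this).adj_sub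
  -- key: the subgraph is determined by F p
  have hdet : ∀ p, (p : {G' : G.Subgraph // Nonempty (G'.coe ≃g H)}).1.verts = Set.range (F p) ∧
      ∀ a b, p.1.Adj a b ↔ ∃ u v, H.Adj u v ∧ F p u = a ∧ F p v = b := by
    intro p
    set φ := Classical.choice p.2
    constructor
    · ext w
      constructor
      · intro hw
        exact ⟨φ ⟨w, hw⟩, by simp [hF, φ]⟩
      · rintro ⟨v, rfl⟩
        exact (φ.symm v).2
    · intro a b
      constructor
      · intro hab
        have ha : a ∈ p.1.verts := hab.fst_mem
        have hb : b ∈ p.1.verts := hab.snd_mem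
        refine ⟨φ ⟨a, ha⟩, φ ⟨b, hb⟩, ?_, by simp [hF, φ], by simp [hF, φ]⟩
        have : p.1.coe.Adj ⟨a, ha⟩ ⟨b, hb⟩ := by rw [p.1.coe_adj]; exact hab
        exact φ.map_adj_iff.mpr this
      · rintro ⟨u, v, huv, rfl, rfl⟩
        have : p.1.coe.Adj (φ.symm u) (φ.symm v) := φ.symm.map_adj_iff.mpr huv
        rw [p.1.coe_adj] at this
        exact this
  have hinj : Function.Injective (fun p => (⟨F p, hmem p⟩ : EmbSet H G)) := by
    intro p q hpq
    have hfq : F p = F q := congrArg Subtype.val hpq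
    apply Subtype.ext
    apply SimpleGraph.Subgraph.ext
    · rw [(hdet p).1, (hdet q).1, hfq]
    · ext a b
      rw [(hdet p).2 a b, (hdet q).2 a b, hfq]
  exact Nat.card_le_card_of_injective _ hinj


lemma exists_order_aux {W : Type} [Finite W] {G : SimpleGraph W} {d : ℕ}
    (hG : Degenerate d G) :
    ∀ n (s : Set W), s.ncard = n → ∃ ℓ : W → ℕ, Set.InjOn ℓ s ∧ (∀ w ∈ s, ℓ w < n) ∧
      ∀ w ∈ s, (G.neighborSet w ∩ s ∩ {x | ℓ x < ℓ w}).ncard ≤ d := by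
  intro n
  induction n with
  | zero =>
    intro s hs
    have : s = ∅ := (Set.ncard_eq_zero (Set.toFinite s)).mp hs
    subst this
    exact ⟨fun _ => 0, by simp [Set.InjOn], by simp, by simp⟩
  | succ n ih =>
    classical
    intro s hs
    have hne : s.Nonempty := by
      rw [Set.nonempty_iff_ne_empty]; intro h; subst h; simp at hs
    obtain ⟨v, hv, hvd⟩ := hG s hne
    have hs' : (s \ {v}).ncard = n := by
      rw [Set.ncard_diff_singleton_of_mem hv, hs]
      omega
    obtain ⟨ℓ, hinj, hbd, hdeg⟩ := ih (s \ {v}) hs'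
    have hmem : ∀ {x : W}, x ∈ s → x ≠ v → x ∈ s \ {v} := fun hx hxv => ⟨hx, by simp [hxv]⟩
    refine ⟨fun x => if x = v then n else ℓ x, ?_, ?_, ?_⟩
    · intro x hx y hy hxy
      simp only at hxy
      by_cases hxv : x = v
      · by_cases hyv : y = v
        · rw [hxv, hyv]
        · rw [if_pos hxv, if_neg hyv] at hxy
          exact absurd hxy.symm (Nat.ne_of_lt (hbd y (hmem hy hyv)))
      · by_cases hyv : y = v
        · rw [if_neg hxv, if_pos hyv] at hxy
          exact absurd hxy (Nat.ne_of_lt (hbd x (hmem hx hxv)))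
        · rw [if_neg hxv, if_neg hyv] at hxy
          exact hinj (hmem hx hxv) (hmem hy hyv) hxy
    · intro w hw
      by_cases hwv : w = v
      · simp only [if_pos hwv]; omega
      · simp only [if_neg hwv]
        exact Nat.lt_succ_of_lt (hbd w (hmem hw hwv))
    · intro w hw
      by_cases hwv : w = v
      · subst hwv
        refine le_trans (Set.ncard_le_ncard ?_ (Set.toFinite _)) hvd
        exact fun x hx => ⟨hx.1.1, hx.1.2⟩
      · refine le_trans (Set.ncard_le_ncard ?_ (Set.toFinite _)) (hdeg w (hmem hw hwv))
        rintro x ⟨⟨hx1, hx2⟩, hx3⟩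
        have hxw : (if x = v then n else ℓ x) < (if w = v then n else ℓ w) := hx3
        rw [if_neg hwv] at hxw
        have hxv : x ≠ v := by
          intro h; subst h; rw [if_pos rfl] at hxw
          have := hbd w (hmem hw hwv); omega
        rw [if_neg hxv] at hxw
        exact ⟨⟨hx1, hmem hx2 hxv⟩, hxw⟩

lemma exists_order {W : Type} [Finite W] {G : SimpleGraph W} {d : ℕ}
    (hG : Degenerate d G) :
    ∃ ℓ : W → ℕ, Function.Injective ℓ ∧
      ∀ w, (G.neighborSet w ∩ {x | ℓ x < ℓ w}).ncard ≤ d := by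
  obtain ⟨ℓ, hinj, _, hdeg⟩ := exists_order_aux hG (Set.univ.ncard) Set.univ rfl
  refine ⟨ℓ, fun a b hab => hinj (Set.mem_univ a) (Set.mem_univ b) hab, fun w => ?_⟩
  simpa using hdeg w (Set.mem_univ w)


noncomputable def rnk {V W : Type} (ℓ : W → ℕ) (f : V → W) (v : V) : ℕ :=
  {u | ℓ (f u) < ℓ (f v)}.ncard

lemma rnk_mono {X : Type} (a : X → ℕ) {u v : X} [Finite X] (h : a u < a v) :
    {x | a x < a u}.ncard < {x | a x < a v}.ncard := by
  apply Set.ncard_lt_ncard _ (Set.toFinite _)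
  exact ⟨fun x hx => lt_trans hx h, fun hsub => absurd (hsub h) (lt_irrefl (a u))⟩

lemma rnk_lt_iff {X : Type} (a : X → ℕ) {u v : X} [Finite X] :
    {x | a x < a u}.ncard < {x | a x < a v}.ncard ↔ a u < a v := by
  constructor
  · intro h
    by_contra hh
    push_neg at hh
    rcases lt_or_eq_of_le hh with h1 | h1
    · exact absurd (rnk_mono a h1) (by omega)
    · rw [h1] at h; exact absurd h (lt_irrefl _)
  · exact rnk_mono a

lemma rnk_lt_card {X : Type} [Fintype X] (a : X → ℕ) (v : X) :
    {x | a x < a v}.ncard < Fintype.card X := by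
  have h : {x | a x < a v} ⊂ Set.univ :=
    ⟨Set.subset_univ _, fun h => absurd (h (Set.mem_univ v)) (lt_irrefl (a v))⟩
  have := Set.ncard_lt_ncard h (Set.toFinite _)
  rwa [Set.ncard_univ, Nat.card_eq_fintype_card] at this

lemma bddAbove_alpha {V : Type} [Finite V] (d : ℕ) (H : SimpleGraph V) :
    BddAbove {n | ∃ s : Set V, s.Pairwise (fun u v => ¬ H.Adj u v) ∧
      (∀ v ∈ s, (H.neighborSet v).ncard ≤ d) ∧ s.ncard = n} := by
  refine ⟨Nat.card V, ?_⟩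
  rintro m ⟨s, _, _, rfl⟩
  have := Set.ncard_le_ncard (Set.subset_univ s) (Set.toFinite _)
  rwa [Set.ncard_univ] at this

lemma ncard_inj_of_rank_eq {W : Type} [Finite W] {ℓ : W → ℕ} (hℓ : Injective ℓ)
    {N : Set W} {a b : W} (ha : a ∈ N) (hb : b ∈ N)
    (h : (N ∩ {x | ℓ x < ℓ a}).ncard = (N ∩ {x | ℓ x < ℓ b}).ncard) : a = b := by
  rcases lt_trichotomy (ℓ a) (ℓ b) with h1 | h1 | h1
  · exfalso
    have hss : N ∩ {x | ℓ x < ℓ a} ⊂ N ∩ {x | ℓ x < ℓ b} := by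
      refine ⟨Set.inter_subset_inter_right N (fun x hx => lt_trans hx h1), fun hsub => ?_⟩
      exact absurd ((hsub ⟨ha, h1⟩).2) (lt_irrefl (ℓ a))
    exact absurd h (Nat.ne_of_lt (Set.ncard_lt_ncard hss (Set.toFinite _)))
  · exact hℓ h1
  · exfalso
    have hss : N ∩ {x | ℓ x < ℓ b} ⊂ N ∩ {x | ℓ x < ℓ a} := by
      refine ⟨Set.inter_subset_inter_right N (fun x hx => lt_trans hx h1), fun hsub => ?_⟩
      exact absurd ((hsub ⟨hb, h1⟩).2) (lt_irrefl (ℓ b))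
    exact absurd h.symm (Nat.ne_of_lt (Set.ncard_lt_ncard hss (Set.toFinite _)))

section PerR

variable {V W : Type} [Fintype V] [Fintype W] {H : SimpleGraph V} {G : SimpleGraph W}

lemma card_Er_le [Nonempty V] (d : ℕ) (ℓ : W → ℕ) (hℓ : Injective ℓ)
    (hℓd : ∀ w, (G.neighborSet w ∩ {x | ℓ x < ℓ w}).ncard ≤ d) (r : V → ℕ) :
    ({f : V → W | f ∈ EmbSet H G ∧ rnk ℓ f = r}).ncard ≤
      Nat.card W ^ alphaD d H * (d + 1) ^ Fintype.card V := by
  classical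
  set E : Set (V → W) := {f : V → W | f ∈ EmbSet H G ∧ rnk ℓ f = r} with hE
  rcases E.eq_empty_or_nonempty with hemp | ⟨f₀, hf₀⟩
  · simp [hemp]
  have hW : Nonempty W := ⟨f₀ (Classical.arbitrary V)⟩
  have hn1 : 1 ≤ Nat.card W := Nat.card_pos
  -- basic facts for members of E
  have hfact : ∀ f ∈ E, ∀ u v : V, (r u < r v ↔ ℓ (f u) < ℓ (f v)) := by
    intro f hf u v
    rw [← hf.2]
    exact rnk_lt_iff (fun x => ℓ (f x))
  have hrinj : ∀ f ∈ E, ∀ u v : V, r u = r v → u = v := by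
    intro f hf u v huv
    have h1 := hfact f hf u v
    have h2 := hfact f hf v u
    have : ℓ (f u) = ℓ (f v) := by omega
    exact hf.1.1 (hℓ this)
  -- the free set
  set S : Set V := {v | ∀ u, H.Adj v u → r u < r v} with hS
  have hSpair : S.Pairwise (fun u v => ¬ H.Adj u v) := by
    intro u hu v hv huv hadj
    have h1 := hu v hadj
    have h2 := hv u hadj.symm
    omega
  have hSdeg : ∀ v ∈ S, (H.neighborSet v).ncard ≤ d := by
    intro v hv
    refine le_trans (Set.ncard_le_ncard_of_injOn f₀ ?_ (hf₀.1.1.injOn) (Set.toFinite _))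
      (hℓd (f₀ v))
    intro u hu
    refine ⟨hf₀.1.2 v u hu, ?_⟩
    exact (hfact f₀ hf₀ u v).mp (hv u hu)
  have hSle : S.ncard ≤ alphaD d H :=
    le_csSup (bddAbove_alpha d H) ⟨S, hSpair, hSdeg, rfl⟩
  -- witness function for non-free vertices
  set uf : V → V := fun v =>
    if hv : ∃ u, H.Adj v u ∧ ¬ r u < r v then hv.choose else Classical.arbitrary V with huf
  have hufspec : ∀ v, v ∉ S → H.Adj v (uf v) ∧ ¬ r (uf v) < r v := by
    intro v hv
    have hex : ∃ u, H.Adj v u ∧ ¬ r u < r v := by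
      rw [hS, Set.mem_setOf_eq] at hv
      push_neg at hv
      obtain ⟨u, h1, h2⟩ := hv
      exact ⟨u, h1, by omega⟩
    rw [huf]
    simp only [dif_pos hex]
    exact hex.choose_spec
  have hrlt : ∀ f ∈ E, ∀ v, v ∉ S → r v < r (uf v) := by
    intro f hf v hv
    obtain ⟨hadj, hnlt⟩ := hufspec v hv
    have hne : uf v ≠ v := fun h => H.irrefl (h ▸ hadj)
    have : r (uf v) ≠ r v := fun h => hne (hrinj f hf _ _ h)
    omega
  -- the neighborhood sets and codes
  set N : (V → W) → V → Set W := fun f v =>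
    G.neighborSet (f (uf v)) ∩ {x | ℓ x < ℓ (f (uf v))} with hN
  have hmemN : ∀ f ∈ E, ∀ v, v ∉ S → f v ∈ N f v := by
    intro f hf v hv
    obtain ⟨hadj, _⟩ := hufspec v hv
    refine ⟨(hf.1.2 v (uf v) hadj).symm, ?_⟩
    exact (hfact f hf v (uf v)).mp (hrlt f hf v hv)
  set code : (V → W) → V → ℕ := fun f v => ((N f v) ∩ {x | ℓ x < ℓ (f v)}).ncard with hcode
  have hcodele : ∀ f v, code f v ≤ d :=
    fun f v => le_trans (Set.ncard_le_ncard Set.inter_subset_left (Set.toFinite _))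
      (hℓd (f (uf v)))
  -- the encoding map
  set Φ : E → (↥S → W) × (V → Fin (d + 1)) := fun f =>
    (fun v => f.1 v, fun v => ⟨min (code f.1 v) d, by omega⟩) with hΦ
  have hΦinj : Injective Φ := by
    intro f g hfg
    rw [Prod.ext_iff] at hfg
    have h1 : ∀ v : V, v ∈ S → f.1 v = g.1 v := fun v hv => congrFun hfg.1 ⟨v, hv⟩
    have h2 : ∀ v : V, code f.1 v = code g.1 v := by
      intro v
      have := congrFun hfg.2 v
      rw [Fin.mk_eq_mk] at this
      have hf := hcodele f.1 v
      have hg := hcodele g.1 v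
      omega
    have hrbd : ∀ v : V, r v < Fintype.card V := by
      intro v
      rw [← f.2.2]
      exact rnk_lt_card (fun x => ℓ (f.1 x)) v
    have key : ∀ k, ∀ v : V, Fintype.card V - r v ≤ k → f.1 v = g.1 v := by
      intro k
      induction k with
      | zero => intro v hvk; exact absurd hvk (by have := hrbd v; omega)
      | succ k ih =>
        intro v hvk
        by_cases hv : v ∈ S
        · exact h1 v hv
        · have hru : r v < r (uf v) := hrlt f.1 f.2 v hv
          have hufv : f.1 (uf v) = g.1 (uf v) := ih (uf v) (by have := hrbd (uf v); omega)
          have hNfg : N f.1 v = N g.1 v := by rw [hN]; simp only [hufv]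
          have hmf : f.1 v ∈ N f.1 v := hmemN f.1 f.2 v hv
          have hmg : g.1 v ∈ N f.1 v := hNfg ▸ hmemN g.1 g.2 v hv
          refine ncard_inj_of_rank_eq hℓ hmf hmg ?_
          have := h2 v
          rw [hcode] at this
          simp only at this
          rw [← hNfg] at this
          exact this
    exact Subtype.ext (funext fun v => key (Fintype.card V) v (by omega))
  have hcard : Nat.card E ≤ Nat.card ((↥S → W) × (V → Fin (d + 1))) :=
    Nat.card_le_card_of_injective Φ hΦinj
  rw [Nat.card_prod, Nat.card_fun, Nat.card_fun] at hcard
  rw [← Nat.card_coe_set_eq]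
  refine le_trans hcard ?_
  have e1 : Nat.card ↥S = S.ncard := Nat.card_coe_set_eq S
  have e2 : Nat.card (Fin (d + 1)) = d + 1 := Nat.card_eq_fintype_card.trans (Fintype.card_fin _)
  have e3 : Nat.card V = Fintype.card V := Nat.card_eq_fintype_card
  rw [e1, e2, e3]
  exact Nat.mul_le_mul (Nat.pow_le_pow_right hn1 hSle) le_rfl

end PerR

lemma ncard_biUnion_le {α ι : Type} [Finite α] (t : Finset ι) (s : ι → Set α) :
    (⋃ i ∈ t, s i).ncard ≤ ∑ i ∈ t, (s i).ncard := by
  classical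
  induction t using Finset.induction with
  | empty => simp
  | @insert a t ha ih =>
    rw [Finset.set_biUnion_insert, Finset.sum_insert ha]
    exact le_trans (Set.ncard_union_le _ _) (Nat.add_le_add_left ih _)

lemma card_embs_le {V W : Type} [Fintype V] [Fintype W] [Nonempty V] (H : SimpleGraph V)
    (G : SimpleGraph W) (d : ℕ) (hG : Degenerate d G) :
    Nat.card (EmbSet H G) ≤
      Fintype.card V ^ Fintype.card V *
        (Nat.card W ^ alphaD d H * (d + 1) ^ Fintype.card V) := by
  classical
  obtain ⟨ℓ, hℓ, hℓd⟩ := exists_order hG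
  set h := Fintype.card V with hh
  set Er : (V → Fin h) → Set (V → W) :=
    fun r => {f | f ∈ EmbSet H G ∧ rnk ℓ f = fun v => (r v : ℕ)} with hEr
  have hRmem : ∀ f ∈ EmbSet H G, f ∈ ⋃ r ∈ Finset.univ, Er r := by
    intro f hf
    have hRlt : ∀ v, rnk ℓ f v < h := fun v => rnk_lt_card (fun u => ℓ (f u)) v
    exact Set.mem_biUnion (Finset.mem_univ (fun v => (⟨rnk ℓ f v, hRlt v⟩ : Fin h)))
      ⟨hf, rfl⟩
  have h1 : Nat.card (EmbSet H G) ≤ ∑ r : V → Fin h, (Er r).ncard := by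
    rw [Nat.card_coe_set_eq]
    exact le_trans (Set.ncard_le_ncard hRmem (Set.toFinite _)) (ncard_biUnion_le _ _)
  refine le_trans h1 ?_
  have h2 : ∀ r : V → Fin h,
      (Er r).ncard ≤ Nat.card W ^ alphaD d H * (d + 1) ^ Fintype.card V := by
    intro r
    exact card_Er_le d ℓ hℓ hℓd (fun v => (r v : ℕ))
  refine le_trans (Finset.sum_le_card_nsmul _ _ _ (fun r _ => h2 r)) ?_
  rw [smul_eq_mul]
  apply Nat.mul_le_mul_right
  simp [Fintype.card_fun, ← hh]


section Lower

/-- projection of the duplicated vertex type onto `V`. -/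
def lproj {V : Type} (S : Set V) (k : ℕ) : (V ⊕ (↥S × Fin k)) → V := Sum.elim id (fun p => ↑p.1)

variable {V : Type} (H : SimpleGraph V) (S : Set V) (k : ℕ)

/-- The duplication graph: `V` together with `k` extra copies of `S`, plus `k`
isolated vertices. -/
def LG : SimpleGraph ((V ⊕ (↥S × Fin k)) ⊕ Fin k) where
  Adj a b := match a, b with
    | Sum.inl x, Sum.inl y => H.Adj (lproj S k x) (lproj S k y)
    | _, _ => False
  symm := by
    constructor
    intro a b hab
    match a, b with
    | Sum.inl x, Sum.inl y => exact (hab : H.Adj _ _).symm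
  loopless := by
    constructor
    intro a hab
    match a with
    | Sum.inl x => exact H.irrefl hab

variable {H S k}

lemma LG_adj_inl (x y : V ⊕ (↥S × Fin k)) :
    (LG H S k).Adj (Sum.inl x) (Sum.inl y) ↔ H.Adj (lproj S k x) (lproj S k y) :=
  Iff.rfl

lemma LG_adj_inr (j : Fin k) (a : (V ⊕ (↥S × Fin k)) ⊕ Fin k) :
    ¬ (LG H S k).Adj (Sum.inr j) a := by
  intro h
  match a with
  | Sum.inl x => exact h
  | Sum.inr j' => exact h

lemma LG_degenerate [Fintype V] {d : ℕ} (hH : Degenerate d H)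
    (hdeg : ∀ v ∈ S, (H.neighborSet v).ncard ≤ d)
    (hpair : S.Pairwise (fun u v => ¬ H.Adj u v)) :
    Degenerate d (LG H S k) := by
  intro s hs
  by_cases hr : ∃ j : Fin k, Sum.inr j ∈ s
  · obtain ⟨j, hj⟩ := hr
    refine ⟨Sum.inr j, hj, ?_⟩
    have : (LG H S k).neighborSet (Sum.inr j) = ∅ := by
      ext a; simp only [SimpleGraph.mem_neighborSet, Set.mem_empty_iff_false, iff_false]
      exact LG_adj_inr j a
    simp [this]
  · by_cases hc : ∃ (u : ↥S) (i : Fin k), Sum.inl (Sum.inr (u, i)) ∈ s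
    · obtain ⟨u, i, hui⟩ := hc
      refine ⟨Sum.inl (Sum.inr (u, i)), hui, ?_⟩
      have hsub : (LG H S k).neighborSet (Sum.inl (Sum.inr (u, i))) ∩ s ⊆
          (fun w => (Sum.inl (Sum.inl w) : (V ⊕ (↥S × Fin k)) ⊕ Fin k)) '' (H.neighborSet ↑u) := by
        rintro a ⟨ha, has⟩
        match a with
        | Sum.inl (Sum.inl w) =>
          exact ⟨w, (LG_adj_inl _ _).mp ha, rfl⟩
        | Sum.inl (Sum.inr (v, i')) =>
          exfalso
          have hadj : H.Adj ↑u ↑v := (LG_adj_inl (Sum.inr (u, i)) (Sum.inr (v, i'))).mp ha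
          by_cases huv : (↑u : V) = ↑v
          · exact H.irrefl (huv ▸ hadj)
          · exact hpair u.2 v.2 huv hadj
        | Sum.inr j => exact absurd has (fun h => hr ⟨j, h⟩)
      refine le_trans (Set.ncard_le_ncard hsub (Set.toFinite _)) ?_
      rw [Set.ncard_image_of_injective _ (fun a b hab => by
        simpa using hab)]
      exact hdeg ↑u u.2
    · -- s consists only of original vertices
      set t : Set V := {v | Sum.inl (Sum.inl v) ∈ s} with ht
      have htne : t.Nonempty := by
        obtain ⟨a, ha⟩ := hs
        match a with
        | Sum.inl (Sum.inl w) => exact ⟨w, ha⟩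
        | Sum.inl (Sum.inr (v, i')) => exact absurd ⟨v, i', ha⟩ hc
        | Sum.inr j => exact absurd ⟨j, ha⟩ hr
      obtain ⟨v, hv, hvd⟩ := hH t htne
      refine ⟨Sum.inl (Sum.inl v), hv, ?_⟩
      have hsub : (LG H S k).neighborSet (Sum.inl (Sum.inl v)) ∩ s ⊆
          (fun w => (Sum.inl (Sum.inl w) : (V ⊕ (↥S × Fin k)) ⊕ Fin k)) ''
            (H.neighborSet v ∩ t) := by
        rintro a ⟨ha, has⟩
        match a with
        | Sum.inl (Sum.inl w) =>
          exact ⟨w, ⟨(LG_adj_inl _ _).mp ha, has⟩, rfl⟩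
        | Sum.inl (Sum.inr (u, i')) => exact absurd ⟨u, i', has⟩ hc
        | Sum.inr j => exact absurd has (fun h => hr ⟨j, h⟩)
      refine le_trans (Set.ncard_le_ncard hsub (Set.toFinite _)) ?_
      rw [Set.ncard_image_of_injective _ (fun a b hab => by simpa using hab)]
      exact hvd

end Lower

section Emb

variable {V : Type} {H : SimpleGraph V} {S : Set V} {k : ℕ}

noncomputable def cmap (S : Set V) (k : ℕ) (σ : ↥S → Fin k) : V → (V ⊕ (↥S × Fin k)) :=
  fun v => @dite _ (v ∈ S) (Classical.dec _)
    (fun h => Sum.inr (⟨v, h⟩, σ ⟨v, h⟩)) (fun _ => Sum.inl v)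

lemma lproj_cmap (σ : ↥S → Fin k) (v : V) : lproj S k (cmap S k σ v) = v := by
  unfold cmap lproj
  split <;> simp

noncomputable def emap (S : Set V) (k : ℕ) (σ : ↥S → Fin k) :
    V → (V ⊕ (↥S × Fin k)) ⊕ Fin k := fun v => Sum.inl (cmap S k σ v)

lemma emap_inj (σ : ↥S → Fin k) : Injective (emap S k σ) := by
  intro a b hab
  have h1 : cmap S k σ a = cmap S k σ b := by simpa [emap] using hab
  have := congrArg (lproj S k) h1
  rwa [lproj_cmap, lproj_cmap] at this

lemma emap_adj (σ : ↥S → Fin k) (u v : V) :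
    (LG H S k).Adj (emap S k σ u) (emap S k σ v) ↔ H.Adj u v := by
  rw [emap, emap, LG_adj_inl, lproj_cmap, lproj_cmap]

noncomputable def lsub (H : SimpleGraph V) (σ : ↥S → Fin k) : (LG H S k).Subgraph where
  verts := Set.range (emap S k σ)
  Adj a b := ∃ u v, H.Adj u v ∧ emap S k σ u = a ∧ emap S k σ v = b
  adj_sub := by rintro a b ⟨u, v, huv, rfl, rfl⟩; exact (emap_adj σ u v).mpr huv
  edge_vert := by rintro a b ⟨u, v, huv, rfl, rfl⟩; exact ⟨u, rfl⟩
  symm := by constructor; rintro a b ⟨u, v, huv, rfl, rfl⟩; exact ⟨v, u, huv.symm, rfl, rfl⟩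

noncomputable def lsubIso (H : SimpleGraph V) (σ : ↥S → Fin k) : (lsub H σ).coe ≃g H where
  toEquiv := (Equiv.ofInjective _ (emap_inj σ)).symm
  map_rel_iff' := by
    intro a b
    have hea : emap S k σ ((Equiv.ofInjective _ (emap_inj σ)).symm a) = ↑a :=
      Equiv.apply_ofInjective_symm (emap_inj σ) a
    have heb : emap S k σ ((Equiv.ofInjective _ (emap_inj σ)).symm b) = ↑b :=
      Equiv.apply_ofInjective_symm (emap_inj σ) b
    rw [SimpleGraph.Subgraph.coe_adj]
    constructor
    · intro h
      exact ⟨_, _, h, hea, heb⟩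
    · rintro ⟨u, v, huv, hu, hv⟩
      have h1 : u = (Equiv.ofInjective _ (emap_inj σ)).symm a :=
        emap_inj σ (hu.trans hea.symm)
      have h2 : v = (Equiv.ofInjective _ (emap_inj σ)).symm b :=
        emap_inj σ (hv.trans heb.symm)
      exact h1 ▸ h2 ▸ huv

lemma emap_mem_S (σ : ↥S → Fin k) (u : ↥S) :
    emap S k σ ↑u = Sum.inl (Sum.inr (u, σ u)) := by
  unfold emap cmap
  rw [dif_pos u.2]

lemma lsub_inj (H : SimpleGraph V) : Injective (fun σ : ↥S → Fin k => lsub H σ) := by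
  intro σ σ' h
  have hverts : Set.range (emap S k σ) = Set.range (emap S k σ') :=
    congrArg SimpleGraph.Subgraph.verts h
  funext u
  have hmem : Sum.inl (Sum.inr (u, σ u)) ∈ Set.range (emap S k σ') := by
    rw [← hverts]
    exact ⟨↑u, emap_mem_S σ u⟩
  obtain ⟨w, hw⟩ := hmem
  unfold emap cmap at hw
  by_cases hwS : w ∈ S
  · rw [dif_pos hwS] at hw
    have hp : ((⟨w, hwS⟩ : ↥S), σ' ⟨w, hwS⟩) = (u, σ u) :=
      Sum.inr_injective (Sum.inl_injective hw)
    have h1 : (⟨w, hwS⟩ : ↥S) = u := congrArg Prod.fst hp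
    have h2 : σ' ⟨w, hwS⟩ = σ u := congrArg Prod.snd hp
    rw [h1] at h2
    exact h2.symm
  · rw [dif_neg hwS] at hw
    exact absurd (Sum.inl_injective hw) (by simp)

lemma le_subCount_LG [Fintype V] (H : SimpleGraph V) (S : Set V) (k : ℕ) :
    k ^ S.ncard ≤ subCount H (LG H S k) := by
  haveI : Finite (LG H S k).Subgraph := finite_subgraph _
  have hinj : Injective (fun σ : ↥S → Fin k =>
      (⟨lsub H σ, ⟨lsubIso H σ⟩⟩ : {G' : (LG H S k).Subgraph // Nonempty (G'.coe ≃g H)})) := by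
    intro σ σ' h
    exact lsub_inj H (Subtype.ext_iff.mp h)
  have := Nat.card_le_card_of_injective _ hinj
  rwa [Nat.card_fun, Nat.card_eq_fintype_card, Fintype.card_fin,
    Nat.card_coe_set_eq] at this

lemma card_LG_verts [Fintype V] (S : Set V) (k : ℕ) :
    Nat.card ((V ⊕ (↥S × Fin k)) ⊕ Fin k) = Fintype.card V + S.ncard * k + k := by
  rw [Nat.card_sum, Nat.card_sum, Nat.card_prod, Nat.card_eq_fintype_card (α := Fin k),
    Fintype.card_fin, Nat.card_coe_set_eq, Nat.card_eq_fintype_card]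

end Emb


lemma alpha_attained {V : Type} [Fintype V] (d : ℕ) (H : SimpleGraph V) :
    ∃ S : Set V, S.Pairwise (fun u v => ¬ H.Adj u v) ∧
      (∀ v ∈ S, (H.neighborSet v).ncard ≤ d) ∧ S.ncard = alphaD d H := by
  have h0 : ∃ s : Set V, s.Pairwise (fun u v => ¬ H.Adj u v) ∧
      (∀ v ∈ s, (H.neighborSet v).ncard ≤ d) ∧ s.ncard = 0 :=
    ⟨∅, by simp, by simp, by simp⟩
  have hmem := Nat.sSup_mem ⟨0, h0⟩ (bddAbove_alpha d H)
  obtain ⟨S, h1, h2, h3⟩ := hmem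
  exact ⟨S, h1, h2, h3⟩

lemma alphaD_of_isEmpty {V : Type} [IsEmpty V] (d : ℕ) (H : SimpleGraph V) :
    alphaD d H = 0 := by
  unfold alphaD
  apply Nat.le_antisymm _ (Nat.zero_le _)
  have h0 : ∃ s : Set V, s.Pairwise (fun u v => ¬ H.Adj u v) ∧
      (∀ v ∈ s, (H.neighborSet v).ncard ≤ d) ∧ s.ncard = 0 :=
    ⟨∅, by simp, by simp, by simp⟩
  refine csSup_le ⟨0, h0⟩ ?_
  rintro n ⟨s, -, -, rfl⟩
  simp [Set.eq_empty_of_isEmpty s]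

/-- Let `d ≥ 0`, `D_d` the class of `d`-degenerate graphs, and `H` a `d`-degenerate graph.
There are positive reals `c₁, c₂` with `ex(H, D_d, n) ≤ c₂ · n^{α_d(H)}` for all `n`
(i.e. every `n`-vertex `d`-degenerate graph has at most `c₂ · n^{α_d(H)}` `H`-subgraphs)
and `ex(H, D_d, n) ≥ c₁ · n^{α_d(H)}` for infinitely many `n`. -/
theorem stmt18 (d : ℕ) {V : Type} [Fintype V] (H : SimpleGraph V)
    (hH : Degenerate d H) :
    ∃ c₁ c₂ : ℝ, 0 < c₁ ∧ 0 < c₂ ∧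
      (∀ (W : Type) [Fintype W] (G : SimpleGraph W), Degenerate d G →
          (subCount H G : ℝ) ≤ c₂ * (Nat.card W : ℝ) ^ (alphaD d H)) ∧
      {n : ℕ | ∃ (W : Type) (_ : Fintype W) (G : SimpleGraph W),
          Degenerate d G ∧ Nat.card W = n ∧
          c₁ * (n : ℝ) ^ (alphaD d H) ≤ (subCount H G : ℝ)}.Infinite := by
  classical
  obtain ⟨S, hSpair, hSdeg, hScard⟩ := alpha_attained d H
  set α := alphaD d H with hα
  set h := Fintype.card V with hh
  have hc2pos : 0 < h ^ h * (d + 1) ^ h := by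
    have h1 : 0 < h ^ h := by
      rcases Nat.eq_zero_or_pos h with h0 | h0
      · simp [h0]
      · exact pow_pos h0 h
    exact Nat.mul_pos h1 (pow_pos (Nat.succ_pos d) h)
  refine ⟨1 / ((h : ℝ) + α + 1) ^ α, ((h ^ h * (d + 1) ^ h : ℕ) : ℝ), by positivity,
    by exact_mod_cast hc2pos, ?_, ?_⟩
  · -- upper bound
    intro W _ G hG
    cases isEmpty_or_nonempty V with
    | inl hE =>
      haveI := hE
      have hα0 : α = 0 := alphaD_of_isEmpty d H
      have h1 : subCount H G ≤ Nat.card (V → W) :=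
        le_trans (subCount_le_embs H G)
          (Nat.card_le_card_of_injective Subtype.val Subtype.val_injective)
      have h2 : Nat.card (V → W) = 1 := by
        rw [Nat.card_fun, Nat.card_of_isEmpty (α := V), pow_zero]
      have h3 : subCount H G ≤ 1 := h2 ▸ h1
      have h4 : (1 : ℝ) ≤ ((h ^ h * (d + 1) ^ h : ℕ) : ℝ) := by exact_mod_cast hc2pos
      rw [hα0, pow_zero, mul_one]
      calc (subCount H G : ℝ) ≤ 1 := by exact_mod_cast h3
        _ ≤ _ := h4
    | inr hNE =>
      haveI := hNE
      have h1 : subCount H G ≤ h ^ h * (Nat.card W ^ α * (d + 1) ^ h) :=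
        le_trans (subCount_le_embs H G) (card_embs_le H G d hG)
      have h2 : subCount H G ≤ (h ^ h * (d + 1) ^ h) * Nat.card W ^ α :=
        le_trans h1 (Nat.le_of_eq (by ring))
      exact_mod_cast h2
  · -- lower bound
    apply Set.infinite_of_injective_forall_mem
      (f := fun m : ℕ => h + (α + 1) * (m + 1))
    · intro a b hab
      simp only at hab
      have h2 : (α + 1) * (a + 1) = (α + 1) * (b + 1) := Nat.add_left_cancel hab
      have := Nat.eq_of_mul_eq_mul_left (Nat.succ_pos α) h2
      omega
    · intro m
      set k := m + 1 with hk
      haveI : Fintype ↥S := Fintype.ofFinite _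
      refine ⟨(V ⊕ (↥S × Fin k)) ⊕ Fin k, inferInstance, LG H S k,
        LG_degenerate hH hSdeg hSpair, ?_, ?_⟩
      · rw [card_LG_verts, hScard]; ring
      · have h2 : k ^ α ≤ subCount H (LG H S k) := hScard ▸ le_subCount_LG H S k
        have hb : (0 : ℝ) < (h : ℝ) + α + 1 := by positivity
        have h3 : ((h + (α + 1) * (m + 1) : ℕ) : ℝ) ≤ ((h : ℝ) + α + 1) * k := by
          push_cast
          nlinarith [Nat.cast_nonneg (α := ℝ) h, Nat.cast_nonneg (α := ℝ) m,
            Nat.cast_nonneg (α := ℝ) α, (by simp [hk] : (k : ℝ) = m + 1)]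
        have h4 : ((h + (α + 1) * (m + 1) : ℕ) : ℝ) ^ α ≤
            ((h : ℝ) + α + 1) ^ α * (k : ℝ) ^ α := by
          rw [← mul_pow]
          exact pow_le_pow_left₀ (Nat.cast_nonneg _) h3 α
        calc (1 / ((h : ℝ) + α + 1) ^ α) * ((h + (α + 1) * (m + 1) : ℕ) : ℝ) ^ α
            ≤ (1 / ((h : ℝ) + α + 1) ^ α) * (((h : ℝ) + α + 1) ^ α * (k : ℝ) ^ α) := by
              apply mul_le_mul_of_nonneg_left h4 (by positivity)
          _ = (k : ℝ) ^ α := by field_simp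
          _ ≤ (subCount H (LG H S k) : ℝ) := by exact_mod_cast h2
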